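/- Sidorenko's conjecture holds for trees of depth at most 2 (spiders): if H is a bipartite graph obtained by taking a root vertex u joined to vertices v₁,...,v_t, and attaching arbitrary sets of leaves to each vᵢ, with m edges total, then t_H(G) ≥ t_{K₂}(G)^m for every graph G. -/

import Mathlib

open Finset
open scoped Classical

/-- The number of graph homomorphisms from `H` to `G`. -/
noncomputable def homCount {A B : Type*} [Fintype A] [Fintype B]
    (H : SimpleGraph A) (G : SimpleGraph B) : ℕ :=
  (Finset.univ.filter (fun f : A → B => ∀ a b, H.Adj a b → G.Adj (f a) (f b))).card

/-- The spider (depth-2 tree): a root `none`, joined to vertices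
`some (.inl i)` for `i : Fin t`, with `L i` leaves `some (.inr ⟨i, j⟩)`
attached to the `i`-th such vertex. -/
def spider (t : ℕ) (L : Fin t → ℕ) :
    SimpleGraph (Option (Fin t ⊕ Σ i : Fin t, Fin (L i))) :=
  SimpleGraph.fromRel (fun x y =>
    (x = none ∧ ∃ i, y = some (Sum.inl i)) ∨
    (∃ i j, x = some (Sum.inl i) ∧ y = some (Sum.inr ⟨i, j⟩)))

lemma spider_adj {t : ℕ} {L : Fin t → ℕ} (a b : Option (Fin t ⊕ Σ i : Fin t, Fin (L i))) :
    (spider t L).Adj a b ↔ a ≠ b ∧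
      (((a = none ∧ ∃ i, b = some (Sum.inl i)) ∨
        (∃ i j, a = some (Sum.inl i) ∧ b = some (Sum.inr ⟨i, j⟩))) ∨
       ((b = none ∧ ∃ i, a = some (Sum.inl i)) ∨
        (∃ i j, b = some (Sum.inl i) ∧ a = some (Sum.inr ⟨i, j⟩)))) :=
  SimpleGraph.fromRel_adj _ a b

lemma spider_adj_root {t : ℕ} {L : Fin t → ℕ} (i : Fin t) :
    (spider t L).Adj none (some (Sum.inl i)) :=
  (spider_adj _ _).2 ⟨by simp, Or.inl (Or.inl ⟨rfl, i, rfl⟩)⟩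

lemma spider_adj_leaf {t : ℕ} {L : Fin t → ℕ} (i : Fin t) (j : Fin (L i)) :
    (spider t L).Adj (some (Sum.inl i)) (some (Sum.inr ⟨i, j⟩)) :=
  (spider_adj _ _).2 ⟨by simp, Or.inl (Or.inr ⟨i, j, rfl, rfl⟩)⟩

noncomputable def spiderEquiv {B : Type*} [Fintype B] (t : ℕ) (L : Fin t → ℕ)
    (G : SimpleGraph B) :
    {f : Option (Fin t ⊕ Σ i : Fin t, Fin (L i)) → B //
        ∀ a b, (spider t L).Adj a b → G.Adj (f a) (f b)} ≃
      (x : B) × Π i : Fin t, (y : {y : B // y ∈ G.neighborFinset x}) ×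
        (Fin (L i) → {z : B // z ∈ G.neighborFinset y.1}) where
  toFun f := ⟨f.1 none, fun i =>
    ⟨⟨f.1 (some (Sum.inl i)), by
        rw [SimpleGraph.mem_neighborFinset]; exact f.2 _ _ (spider_adj_root i)⟩,
      fun j => ⟨f.1 (some (Sum.inr ⟨i, j⟩)), by
        rw [SimpleGraph.mem_neighborFinset]; exact f.2 _ _ (spider_adj_leaf i j)⟩⟩⟩
  invFun p := ⟨fun a => Option.rec p.1
      (fun s => Sum.rec (fun i => ((p.2 i).1 : B)) (fun q => ((p.2 q.1).2 q.2 : B)) s) a, by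
    intro a b hab
    rw [spider_adj] at hab
    obtain ⟨hne, (⟨hx, i, hy⟩ | ⟨i, j, hx, hy⟩) | (⟨hy, i, hx⟩ | ⟨i, j, hy, hx⟩)⟩ := hab
    · subst hx; subst hy
      exact (SimpleGraph.mem_neighborFinset _ _ _).1 (p.2 i).1.2
    · subst hx; subst hy
      exact (SimpleGraph.mem_neighborFinset _ _ _).1 ((p.2 i).2 j).2
    · subst hx; subst hy
      exact ((SimpleGraph.mem_neighborFinset _ _ _).1 (p.2 i).1.2).symm
    · subst hx; subst hy
      exact ((SimpleGraph.mem_neighborFinset _ _ _).1 ((p.2 i).2 j).2).symm⟩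
  left_inv f := Subtype.ext (funext fun a => by
    rcases a with _ | (i | ⟨i, j⟩) <;> rfl)
  right_inv p := rfl

lemma homCount_spider {B : Type*} [Fintype B] (t : ℕ) (L : Fin t → ℕ) (G : SimpleGraph B) :
    homCount (spider t L) G =
      ∑ x : B, ∏ i : Fin t, ∑ y ∈ G.neighborFinset x, (G.degree y) ^ (L i) := by
  classical
  have h1 : homCount (spider t L) G =
      Fintype.card {f : Option (Fin t ⊕ Σ i : Fin t, Fin (L i)) → B //
        ∀ a b, (spider t L).Adj a b → G.Adj (f a) (f b)} := by
    rw [homCount, Fintype.card_subtype]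
    congr 1
    ext f
    simp
  rw [h1, Fintype.card_congr (spiderEquiv t L G), Fintype.card_sigma]
  refine Finset.sum_congr rfl fun x _ => ?_
  rw [Fintype.card_pi]
  refine Finset.prod_congr rfl fun i _ => ?_
  rw [Fintype.card_sigma]
  rw [← Finset.sum_coe_sort (G.neighborFinset x)
    (fun y => (G.degree y) ^ (L i))]
  refine Finset.sum_congr rfl fun y _ => ?_
  rw [Fintype.card_fun, Fintype.card_coe, Fintype.card_fin,
    SimpleGraph.card_neighborFinset_eq_degree]

lemma spider_edge_card (t : ℕ) (L : Fin t → ℕ) :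
    (spider t L).edgeFinset.card = t + ∑ i, L i := by
  classical
  have h : (univ : Finset (Fin t ⊕ Σ i : Fin t, Fin (L i))).card
      = (spider t L).edgeFinset.card := by
    refine Finset.card_bij (fun a _ => Sum.elim
      (fun i => s(none, some (Sum.inl i)))
      (fun q : Σ i : Fin t, Fin (L i) => s(some (Sum.inl q.1), some (Sum.inr q))) a) ?_ ?_ ?_
    · rintro (i | ⟨i, j⟩) -
      · exact SimpleGraph.mem_edgeFinset.2 (spider_adj_root i)
      · exact SimpleGraph.mem_edgeFinset.2 (spider_adj_leaf i j)
    · intro a ha b hb h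
      rcases a with i | ⟨i, j⟩ <;> rcases b with i' | ⟨i', j'⟩ <;> simp only [Sum.elim_inl, Sum.elim_inr] at h
      · simp only [Sym2.eq_iff, Option.some.injEq, Sum.inl.injEq] at h
        rcases h with ⟨-, h⟩ | ⟨h, -⟩
        · rw [h]
        · exact absurd h (by simp)
      · exfalso; simp [Sym2.eq_iff] at h
      · exfalso; simp [Sym2.eq_iff] at h
      · simp only [Sym2.eq_iff, Option.some.injEq, Sum.inr.injEq, Sum.inl.injEq,
          Sigma.mk.inj_iff] at h
        rcases h with ⟨h1, h2, h3⟩ | ⟨h, -⟩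
        · subst h1; rw [eq_of_heq h3]
        · exact absurd h (by simp)
    · intro e he
      rw [SimpleGraph.mem_edgeFinset] at he
      induction e with
      | _ x y =>
        rw [SimpleGraph.mem_edgeSet, spider_adj] at he
        obtain ⟨hne, (⟨hx, i, hy⟩ | ⟨i, j, hx, hy⟩) | (⟨hy, i, hx⟩ | ⟨i, j, hy, hx⟩)⟩ := he
        · exact ⟨Sum.inl i, mem_univ _, by rw [hx, hy]; rfl⟩
        · exact ⟨Sum.inr ⟨i, j⟩, mem_univ _, by rw [hx, hy]; rfl⟩
        · exact ⟨Sum.inl i, mem_univ _, by rw [hx, hy]; exact Sym2.eq_swap⟩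
        · exact ⟨Sum.inr ⟨i, j⟩, mem_univ _, by rw [hx, hy]; exact Sym2.eq_swap⟩
  rw [← h]
  simp

/-- Key analytic inequality: Sidorenko for spiders at the level of degree sums. -/
lemma key {B : Type*} [Fintype B] [Nonempty B] (G : SimpleGraph B) (t : ℕ) (ht : 1 ≤ t)
    (L : Fin t → ℕ) :
    (∑ x : B, (G.degree x : ℝ)) ^ (t + ∑ i, L i) ≤
      (Fintype.card B : ℝ) ^ (t + ∑ i, L i - 1) *
        ∑ x : B, ∏ i : Fin t, ∑ y ∈ G.neighborFinset x, (G.degree y : ℝ) ^ (L i) := by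
  classical
  set d : B → ℝ := fun x => (G.degree x : ℝ) with hd
  set D : ℝ := ∑ x : B, d x with hD
  set K : ℕ := ∑ i, L i with hK
  set m : ℕ := t + K with hm
  set n : ℝ := (Fintype.card B : ℝ) with hn
  set N : ℝ := ∑ x : B, ∏ i : Fin t, ∑ y ∈ G.neighborFinset x, (G.degree y : ℝ) ^ (L i)
    with hN
  have hm1 : 1 ≤ m := le_trans ht (Nat.le_add_right t K)
  have hn0 : (0:ℝ) < n := by
    rw [hn]; exact_mod_cast Fintype.card_pos
  have hd0 : ∀ x, 0 ≤ d x := fun x => Nat.cast_nonneg _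
  have hN0 : 0 ≤ N := by
    refine Finset.sum_nonneg fun x _ => Finset.prod_nonneg fun i _ => ?_
    exact Finset.sum_nonneg fun y _ => pow_nonneg (Nat.cast_nonneg _) _
  have hD0 : 0 ≤ D := Finset.sum_nonneg fun x _ => hd0 x
  rcases eq_or_lt_of_le hD0 with hDz | hDpos
  · rw [← hDz, zero_pow (by omega)]
    exact mul_nonneg (pow_nonneg hn0.le _) hN0
  -- main case: D > 0
  set supp : Finset B := univ.filter (fun x => 0 < G.degree x) with hsupp
  have hds : ∀ x ∈ supp, 0 < d x := by
    intro x hx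
    rw [hsupp, mem_filter] at hx
    simp only [hd]
    exact_mod_cast hx.2
  have hDsupp : ∑ x ∈ supp, d x = D := by
    rw [hsupp]
    refine Finset.sum_filter_of_ne fun x _ hne => ?_
    simp only [hd] at hne
    have hne' : G.degree x ≠ 0 := fun h => hne (by rw [h]; simp)
    exact Nat.pos_of_ne_zero hne'
  have hw' : ∑ x ∈ supp, d x / D = 1 := by
    rw [← Finset.sum_div, hDsupp, div_self hDpos.ne']
  have hnb : ∀ x : B, ∀ y ∈ G.neighborFinset x, 1 ≤ d y := by
    intro x y hy
    rw [SimpleGraph.mem_neighborFinset] at hy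
    have hpos : 0 < G.degree y := (SimpleGraph.degree_pos_iff_exists_adj G y).2 ⟨x, hy.symm⟩
    simp only [hd]
    exact_mod_cast hpos
  set P : B → ℝ := fun x => ∏ y ∈ G.neighborFinset x, d y with hP
  have hP1 : ∀ x, 1 ≤ P x := by
    intro x
    have h1 : ∏ y ∈ G.neighborFinset x, (1:ℝ) ≤ ∏ y ∈ G.neighborFinset x, d y :=
      Finset.prod_le_prod (fun y _ => zero_le_one) (hnb x)
    simpa using h1
  have hP0 : ∀ x, 0 < P x := fun x => lt_of_lt_of_le one_pos (hP1 x)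
  -- Step A'
  have stepA : ∀ x ∈ supp,
      d x ^ (t : ℝ) * P x ^ ((K : ℝ) / d x) ≤
        ∏ i : Fin t, ∑ y ∈ G.neighborFinset x, d y ^ (L i) := by
    intro x hx
    have hdx : 0 < d x := hds x hx
    have stepAi : ∀ i : Fin t,
        d x * P x ^ ((L i : ℝ) / d x) ≤ ∑ y ∈ G.neighborFinset x, d y ^ (L i) := by
      intro i
      have amgm := Real.geom_mean_le_arith_mean_weighted (G.neighborFinset x)
        (fun _ => 1 / d x) (fun y => d y ^ (L i))
        (fun y _ => by positivity)
        (by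
          rw [Finset.sum_const, SimpleGraph.card_neighborFinset_eq_degree,
            nsmul_eq_mul]
          rw [hd] at hdx ⊢
          field_simp)
        (fun y _ => pow_nonneg (hd0 y) _)
      have hlhs : ∏ y ∈ G.neighborFinset x, ((d y ^ (L i)) ^ (1 / d x) : ℝ)
          = P x ^ ((L i : ℝ) / d x) := by
        have : ∀ y ∈ G.neighborFinset x,
            ((d y ^ (L i)) ^ (1 / d x) : ℝ) = d y ^ ((L i : ℝ) / d x) := by
          intro y _
          rw [← Real.rpow_natCast (d y) (L i), ← Real.rpow_mul (hd0 y)]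
          congr 1
          field_simp
        rw [Finset.prod_congr rfl this, Real.finset_prod_rpow _ _ (fun y _ => hd0 y), hP]
      rw [hlhs] at amgm
      have hrhs : ∑ y ∈ G.neighborFinset x, (1 / d x) * d y ^ (L i)
          = (1 / d x) * ∑ y ∈ G.neighborFinset x, d y ^ (L i) := by
        rw [Finset.mul_sum]
      rw [hrhs] at amgm
      calc d x * P x ^ ((L i : ℝ) / d x)
          ≤ d x * ((1 / d x) * ∑ y ∈ G.neighborFinset x, d y ^ (L i)) :=
            mul_le_mul_of_nonneg_left amgm hdx.le
        _ = ∑ y ∈ G.neighborFinset x, d y ^ (L i) := by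
            field_simp
    calc d x ^ (t : ℝ) * P x ^ ((K : ℝ) / d x)
        = ∏ i : Fin t, (d x * P x ^ ((L i : ℝ) / d x)) := by
          rw [Finset.prod_mul_distrib, Finset.prod_const, card_univ, Fintype.card_fin]
          rw [← Real.rpow_natCast (d x) t]
          congr 1
          rw [← Real.rpow_sum_of_pos (hP0 x)]
          congr 1
          rw [hK, ← Finset.sum_div]
          congr 1
          push_cast
          rfl
      _ ≤ ∏ i : Fin t, ∑ y ∈ G.neighborFinset x, d y ^ (L i) := by
          refine Finset.prod_le_prod (fun i _ => ?_) (fun i _ => stepAi i)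
          exact mul_nonneg (hd0 x) (Real.rpow_nonneg (hP0 x).le _)
  -- Step B
  have stepB : ∑ x ∈ supp, d x ^ (t:ℝ) * P x ^ ((K:ℝ)/d x) ≤ N := by
    calc ∑ x ∈ supp, d x ^ (t:ℝ) * P x ^ ((K:ℝ)/d x)
        ≤ ∑ x ∈ supp, ∏ i : Fin t, ∑ y ∈ G.neighborFinset x, d y ^ (L i) :=
          Finset.sum_le_sum stepA
      _ ≤ N := by
          rw [hN]
          simp only [hd]
          refine Finset.sum_le_sum_of_subset_of_nonneg (Finset.filter_subset _ _) ?_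
          intro x _ _
          exact Finset.prod_nonneg fun i _ =>
            Finset.sum_nonneg fun y _ => pow_nonneg (Nat.cast_nonneg _) _
  -- Γ : weighted geometric mean of the degrees
  set Γ : ℝ := ∏ x ∈ supp, d x ^ (d x / D) with hΓ
  have hΓpos : 0 < Γ := Finset.prod_pos fun x hx => Real.rpow_pos_of_pos (hds x hx) _
  -- Step C : AM-GM over supp
  have stepC : ∏ x ∈ supp, (D * d x ^ ((t:ℝ) - 1) * P x ^ ((K:ℝ)/d x)) ^ (d x / D)
      ≤ ∑ x ∈ supp, d x ^ (t:ℝ) * P x ^ ((K:ℝ)/d x) := by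
    have amgm := Real.geom_mean_le_arith_mean_weighted supp
      (fun x => d x / D) (fun x => D * d x ^ ((t:ℝ) - 1) * P x ^ ((K:ℝ)/d x))
      (fun x _ => div_nonneg (hd0 x) hD0) hw'
      (fun x _ => mul_nonneg (mul_nonneg hDpos.le (Real.rpow_nonneg (hd0 x) _))
        (Real.rpow_nonneg (hP0 x).le _))
    refine le_trans amgm (le_of_eq (Finset.sum_congr rfl fun x hx => ?_))
    have hdx := hds x hx
    have e1 : d x * d x ^ ((t:ℝ) - 1) = d x ^ (t:ℝ) := by
      nth_rewrite 1 [← Real.rpow_one (d x)]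
      rw [← Real.rpow_add hdx]
      ring_nf
    have e2 : d x / D * (D * d x ^ ((t:ℝ) - 1) * P x ^ ((K:ℝ)/d x))
        = (d x * d x ^ ((t:ℝ) - 1)) * P x ^ ((K:ℝ)/d x) := by
      field_simp
    rw [e2, e1]
  -- Step D : compute the geometric mean
  have prodsplit : ∀ x ∈ supp, (D * d x ^ ((t:ℝ)-1) * P x ^ ((K:ℝ)/d x)) ^ (d x / D)
      = D ^ (d x / D) * (d x ^ (d x / D)) ^ ((t:ℝ)-1) * P x ^ ((K:ℝ)/D) := by
    intro x hx
    have hdx := hds x hx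
    rw [Real.mul_rpow (mul_nonneg hDpos.le (Real.rpow_nonneg (hd0 x) _))
        (Real.rpow_nonneg (hP0 x).le _),
      Real.mul_rpow hDpos.le (Real.rpow_nonneg (hd0 x) _)]
    congr 1
    · congr 1
      rw [← Real.rpow_mul (hd0 x), ← Real.rpow_mul (hd0 x), mul_comm]
    · rw [← Real.rpow_mul (hP0 x).le]
      congr 1
      field_simp
  have prodΓ : ∏ x ∈ supp, (D * d x ^ ((t:ℝ)-1) * P x ^ ((K:ℝ)/d x)) ^ (d x / D)
      = D * Γ ^ ((t:ℝ)-1) * (∏ x ∈ supp, P x) ^ ((K:ℝ)/D) := by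
    rw [Finset.prod_congr rfl prodsplit, Finset.prod_mul_distrib, Finset.prod_mul_distrib]
    congr 1
    · congr 1
      · rw [← Real.rpow_sum_of_pos hDpos, hw', Real.rpow_one]
      · rw [Real.finset_prod_rpow _ _ (fun x _ => Real.rpow_nonneg (hd0 x) _), hΓ]
    · rw [Real.finset_prod_rpow _ _ (fun x _ => (hP0 x).le)]
  -- the product of neighbor-degree products
  have hPprod : ∏ x ∈ supp, P x = ∏ y ∈ supp, d y ^ (G.degree y) := by
    have h1 : ∏ x ∈ supp, P x = ∏ x : B, P x := by
      rw [hsupp]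
      refine Finset.prod_filter_of_ne fun x _ hne => ?_
      by_contra hdeg
      have hdeg0 : G.degree x = 0 := by omega
      have hempty : G.neighborFinset x = ∅ := by
        apply Finset.card_eq_zero.1
        rw [SimpleGraph.card_neighborFinset_eq_degree, hdeg0]
      apply hne
      rw [hP]
      simp only [hempty, Finset.prod_empty]
    have h2 : ∏ x : B, P x = ∏ y : B, d y ^ (G.degree y) := by
      simp only [hP]
      rw [Finset.prod_comm' (s := (univ : Finset B)) (t := fun x => G.neighborFinset x)
        (t' := (univ : Finset B)) (s' := fun y => G.neighborFinset y)
        (f := fun _ y => d y)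
        (by
          intro x y
          simp [SimpleGraph.mem_neighborFinset, SimpleGraph.adj_comm])]
      refine Finset.prod_congr rfl fun y _ => ?_
      rw [Finset.prod_const, SimpleGraph.card_neighborFinset_eq_degree]
    have h3 : ∏ y : B, d y ^ (G.degree y) = ∏ y ∈ supp, d y ^ (G.degree y) := by
      rw [hsupp]
      refine (Finset.prod_filter_of_ne fun y _ hne => ?_).symm
      by_contra hdeg
      have hdeg0 : G.degree y = 0 := by omega
      apply hne
      rw [hdeg0, pow_zero]
    rw [h1, h2, h3]
  have hΓK : (∏ x ∈ supp, P x) ^ ((K:ℝ)/D) = Γ ^ (K:ℝ) := by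
    rw [hPprod]
    rw [← Real.finset_prod_rpow supp _ (fun y _ => pow_nonneg (hd0 y) _) ((K:ℝ)/D)]
    rw [hΓ, ← Real.finset_prod_rpow supp _ (fun y _ => Real.rpow_nonneg (hd0 y) _) (K:ℝ)]
    refine Finset.prod_congr rfl fun y _ => ?_
    rw [← Real.rpow_natCast (d y) (G.degree y), ← Real.rpow_mul (hd0 y),
      ← Real.rpow_mul (hd0 y)]
    congr 1
    have hc : ((G.degree y : ℕ) : ℝ) = d y := by simp only [hd]
    rw [hc]
    ring
  -- Step E : Γ ≥ D / n
  have stepE : D / n ≤ Γ := by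
    have amgm2 := Real.geom_mean_le_arith_mean_weighted supp (fun x => d x / D)
      (fun x => 1 / d x) (fun x _ => div_nonneg (hd0 x) hD0) hw'
      (fun x _ => div_nonneg zero_le_one (hd0 x))
    have hL : ∏ x ∈ supp, ((1 / d x) ^ (d x / D) : ℝ) = Γ⁻¹ := by
      rw [hΓ, ← Finset.prod_inv_distrib]
      refine Finset.prod_congr rfl fun x _ => ?_
      rw [one_div, Real.inv_rpow (hd0 x)]
    have hR : ∑ x ∈ supp, (d x / D) * (1 / d x) = (supp.card : ℝ) / D := by
      have hterm : ∀ x ∈ supp, (d x / D) * (1 / d x) = 1 / D := by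
        intro x hx
        have := (hds x hx).ne'
        field_simp
      rw [Finset.sum_congr rfl hterm, Finset.sum_const, nsmul_eq_mul, mul_one_div]
    rw [hL, hR] at amgm2
    have hcard : (supp.card : ℝ) / D ≤ n / D := by
      gcongr
      rw [hn]
      exact_mod_cast Finset.card_le_univ supp
    have h3 : Γ⁻¹ ≤ n / D := le_trans amgm2 hcard
    have h4 := inv_anti₀ (inv_pos.2 hΓpos) h3
    rwa [inv_inv, inv_div] at h4
  -- assemble
  have main : D * (D / n) ^ ((m:ℝ) - 1) ≤ N := by
    have hexp : (0:ℝ) ≤ (m:ℝ) - 1 := by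
      have : (1:ℝ) ≤ (m:ℝ) := by exact_mod_cast hm1
      linarith
    have c1 : D * (D/n) ^ ((m:ℝ)-1) ≤ D * Γ ^ ((m:ℝ)-1) :=
      mul_le_mul_of_nonneg_left
        (Real.rpow_le_rpow (div_nonneg hDpos.le hn0.le) stepE hexp) hDpos.le
    have c2 : D * Γ ^ ((m:ℝ)-1) = D * (Γ ^ ((t:ℝ)-1) * Γ ^ (K:ℝ)) := by
      rw [← Real.rpow_add hΓpos]
      congr 1
      rw [hm]
      push_cast
      ring
    refine le_trans c1 ?_
    rw [c2]
    calc D * (Γ ^ ((t:ℝ)-1) * Γ ^ (K:ℝ))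
        = D * Γ ^ ((t:ℝ)-1) * (∏ x ∈ supp, P x) ^ ((K:ℝ)/D) := by rw [hΓK]; ring
      _ = ∏ x ∈ supp, (D * d x ^ ((t:ℝ)-1) * P x ^ ((K:ℝ)/d x)) ^ (d x / D) := prodΓ.symm
      _ ≤ ∑ x ∈ supp, d x ^ (t:ℝ) * P x ^ ((K:ℝ)/d x) := stepC
      _ ≤ N := stepB
  -- final computation
  have hnm : (0:ℝ) < n ^ (m-1) := pow_pos hn0 _
  have hDm : D * (D / n) ^ ((m:ℝ) - 1) = D ^ m / n ^ (m-1) := by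
    have hcast : ((m:ℝ) - 1) = ((m - 1 : ℕ) : ℝ) := by
      rw [Nat.cast_sub hm1]
      norm_num
    rw [hcast, Real.rpow_natCast, div_pow]
    rw [eq_div_iff hnm.ne']
    field_simp
    rw [← pow_succ' D (m-1)]
    congr 1
    omega
  rw [hDm] at main
  rw [div_le_iff₀ hnm] at main
  calc D ^ m ≤ N * n ^ (m-1) := main
    _ = n ^ (m-1) * N := by ring


/-- Sidorenko's conjecture for trees of depth at most 2
(spiders): `t_H(G) ≥ t_{K₂}(G)^m` where `m` is the number of edges. -/
theorem stmt13 {B : Type*} [Fintype B] [Nonempty B]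
    (t : ℕ) (L : Fin t → ℕ) (m : ℕ) (hm : (spider t L).edgeFinset.card = m)
    (G : SimpleGraph B) :
    (2 * (G.edgeFinset.card : ℝ) / (Fintype.card B : ℝ) ^ 2) ^ m ≤
      (homCount (spider t L) G : ℝ) /
        (Fintype.card B : ℝ) ^ (Fintype.card (Option (Fin t ⊕ Σ i : Fin t, Fin (L i)))) := by

  classical
  have hmval : m = t + ∑ i, L i := by rw [← hm, spider_edge_card]
  have hcard : Fintype.card (Option (Fin t ⊕ Σ i : Fin t, Fin (L i))) = m + 1 := by
    rw [hmval]
    simp [Fintype.card_option, Fintype.card_sum, Fintype.card_sigma]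
  have hn0 : (0:ℝ) < (Fintype.card B : ℝ) := by exact_mod_cast Fintype.card_pos
  rcases Nat.eq_zero_or_pos t with ht0 | ht
  · subst ht0
    have hm0 : m = 0 := by rw [hmval]; simp
    have h1 : homCount (spider 0 L) G = Fintype.card B := by
      rw [homCount_spider]
      simp
    rw [hm0] at hcard
    rw [hm0, pow_zero, h1, hcard, pow_one, div_self hn0.ne']
  · have hkey := key G t ht L
    rw [← hmval] at hkey
    have hm1 : 1 ≤ m := by omega
    have hD2e : 2 * (G.edgeFinset.card : ℝ) = ∑ x : B, (G.degree x : ℝ) := by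
      have h := G.sum_degrees_eq_twice_card_edges
      have h2 : ((∑ v : B, G.degree v : ℕ) : ℝ) = ((2 * G.edgeFinset.card : ℕ) : ℝ) :=
        congrArg (Nat.cast : ℕ → ℝ) h
      push_cast at h2
      exact h2.symm
    have hNval : (homCount (spider t L) G : ℝ) =
        ∑ x : B, ∏ i : Fin t, ∑ y ∈ G.neighborFinset x, (G.degree y : ℝ) ^ (L i) := by
      rw [homCount_spider]
      push_cast
      rfl
    rw [hcard, hD2e, hNval]
    set n : ℝ := (Fintype.card B : ℝ) with hn
    set D : ℝ := ∑ x : B, (G.degree x : ℝ) with hD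
    set N : ℝ := ∑ x : B, ∏ i : Fin t, ∑ y ∈ G.neighborFinset x, (G.degree y : ℝ) ^ (L i)
      with hN
    have hN0 : 0 ≤ N := by
      refine Finset.sum_nonneg fun x _ => Finset.prod_nonneg fun i _ => ?_
      exact Finset.sum_nonneg fun y _ => pow_nonneg (Nat.cast_nonneg _) _
    have hD0 : 0 ≤ D := Finset.sum_nonneg fun x _ => Nat.cast_nonneg _
    rw [div_pow, div_le_div_iff₀ (by positivity) (by positivity)]
    calc D ^ m * n ^ (m + 1)
        ≤ (n ^ (m-1) * N) * n ^ (m+1) :=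
          mul_le_mul_of_nonneg_right hkey (pow_nonneg hn0.le _)
      _ = N * (n ^ 2) ^ m := by
          rw [← pow_mul, mul_comm (n ^ (m-1)) N, mul_assoc, ← pow_add]
          congr 2
          omega
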